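/- arXiv:2604.23991 — 2 statements merged into one kernel-verified Lean document; each statement's English description precedes it below -/
import Mathlib

section
/- Fix r ∈ ℂ with r ≠ 0, r² ∈ ℝ, and r ≠ ±i. Then for any λ ∈ ℝ and any δ ∈ ℝ with δ ≠ 0, setting τ = δ/(1 + r^{-2}), l = τ/r, k_A = λ + τ, k_B = λ + τ/r², the matrix M = [[k_A, -l], [-l, k_B]] has real entries k_A, k_B ∈ ℝ, nonzero l, satisfies M·(1, r) = λ·(1, r), and its eigenvalues are exactly λ and λ + δ. -/
open Matrix Complex

theorem symmetric_complex_coupling_realization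
    (r : ℂ) (hr : r ≠ 0) (hr2 : (r ^ 2).im = 0) (hri : r ≠ I) (hri' : r ≠ -I)
    (lam δ : ℝ) (hδ : δ ≠ 0)
    (τ l kA kB : ℂ)
    (hτ : τ = (δ : ℂ) / (1 + r⁻¹ ^ 2))
    (hl : l = τ / r)
    (hkA : kA = (lam : ℂ) + τ)
    (hkB : kB = (lam : ℂ) + τ / r ^ 2)
    (M : Matrix (Fin 2) (Fin 2) ℂ)
    (hM : M = !![kA, -l; -l, kB]) :
    kA.im = 0 ∧ kB.im = 0 ∧ l ≠ 0 ∧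
      M.mulVec ![1, r] = (lam : ℂ) • ![1, r] ∧
      spectrum ℂ M = {(lam : ℂ), (lam : ℂ) + δ} := by
  set c : ℝ := (r ^ 2).re with hcdef
  have hc : r ^ 2 = (c : ℂ) := Complex.ext rfl (by simp [hr2])
  have hr2ne : r ^ 2 ≠ 0 := pow_ne_zero _ hr
  have hc0 : (c : ℂ) ≠ 0 := hc ▸ hr2ne
  have hc0' : c ≠ 0 := by exact_mod_cast hc0
  have hfac : r ^ 2 + 1 = (r - I) * (r + I) := by linear_combination Complex.I_sq
  have hc1C : (c : ℂ) + 1 ≠ 0 := by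
    rw [← hc, hfac]
    exact mul_ne_zero (sub_ne_zero.mpr hri)
      (fun h => hri' (eq_neg_of_add_eq_zero_left h))
  have hc1 : c + 1 ≠ 0 := by exact_mod_cast hc1C
  have hden : (1 : ℂ) + (c : ℂ)⁻¹ ≠ 0 := by
    rw [show (1 : ℂ) + (c : ℂ)⁻¹ = ((c : ℂ) + 1) / c by field_simp]
    exact div_ne_zero hc1C hc0
  have hτ2 : τ = (δ : ℂ) / (1 + (c : ℂ)⁻¹) := by rw [hτ, inv_pow, hc]
  have hτ' : τ = ((δ * c / (c + 1) : ℝ) : ℂ) := by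
    rw [hτ2]; push_cast; field_simp
  have hkA' : kA.im = 0 := by
    rw [hkA, hτ']; simp only [Complex.add_im, Complex.ofReal_im, add_zero]
  have hkB' : kB = ((lam + δ / (c + 1) : ℝ) : ℂ) := by
    rw [hkB, hτ', hc]; push_cast; field_simp
  have hτne : τ ≠ 0 := by
    rw [hτ']
    exact_mod_cast div_ne_zero (mul_ne_zero hδ hc0') hc1
  have hll : l * l = τ * τ / (c : ℂ) := by
    rw [hl, div_mul_div_comm, show r * r = r ^ 2 by ring, hc]
  refine ⟨hkA', by rw [hkB']; simp only [Complex.ofReal_im], hl ▸ div_ne_zero hτne hr,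
    ?_, ?_⟩
  · funext i
    fin_cases i <;>
      simp [hM, Matrix.mulVec, dotProduct, hkA, hkB, hl] <;>
      field_simp <;> ring
  · ext x
    rw [spectrum.mem_iff, Matrix.isUnit_iff_isUnit_det, isUnit_iff_ne_zero, not_not]
    have key : ((algebraMap ℂ (Matrix (Fin 2) (Fin 2) ℂ)) x - M).det
        = (x - lam) * (x - ((lam : ℂ) + δ)) := by
      have : ((algebraMap ℂ (Matrix (Fin 2) (Fin 2) ℂ)) x - M).det
          = (x - kA) * (x - kB) - l * l := by
        simp [hM, Matrix.det_fin_two, Matrix.algebraMap_matrix_apply]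
      rw [this, hll, hkA, hkB, hτ2, hc]
      field_simp
      ring
    rw [key, mul_eq_zero, sub_eq_zero, sub_eq_zero]
    simp [Set.mem_insert_iff]
end

section
/- Let M = [[k_A, -l], [-l, k_B]] with l ∈ ℝ, l ≠ 0, and k_A, k_B ∈ ℂ. Suppose M has all eigenvalues real, and (ω₁, ω₂) with ω₁ω₂ ≠ 0 is an eigenvector of M with (real) eigenvalue λ₁. Then r + 1/r ∈ ℝ, where r = ω₂/ω₁. Equivalently, r ∈ ℝ or |r| = 1. -/
open Matrix Complex

theorem real_coupling_complex_detuning_obstruction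
    (l : ℝ) (hl : l ≠ 0) (kA kB : ℂ)
    (M : Matrix (Fin 2) (Fin 2) ℂ)
    (hM : M = !![kA, -(l : ℂ); -(l : ℂ), kB])
    (hspec : ∀ μ ∈ spectrum ℂ M, μ.im = 0)
    (ω₁ ω₂ : ℂ) (hω : ω₁ * ω₂ ≠ 0)
    (lam₁ : ℝ)
    (heig : M.mulVec ![ω₁, ω₂] = (lam₁ : ℂ) • ![ω₁, ω₂]) :
    ((ω₂ / ω₁) + 1 / (ω₂ / ω₁)).im = 0 ∧
      ((ω₂ / ω₁).im = 0 ∨ ‖ω₂ / ω₁‖ = 1) := by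
  have hω₁ : ω₁ ≠ 0 := fun h => hω (by simp [h])
  have hω₂ : ω₂ ≠ 0 := fun h => hω (by simp [h])
  have hlC : (l : ℂ) ≠ 0 := Complex.ofReal_ne_zero.mpr hl
  have e0 := congrFun heig 0
  have e1 := congrFun heig 1
  subst hM
  simp [Matrix.mulVec, dotProduct, Fin.sum_univ_two] at e0 e1
  have key : (kA - (lam₁ : ℂ)) * (kB - (lam₁ : ℂ)) = (l : ℂ) ^ 2 := by
    have key' : (kA - (lam₁ : ℂ)) * (kB - (lam₁ : ℂ)) * (ω₁ * ω₂)
        = (l : ℂ) ^ 2 * (ω₁ * ω₂) := by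
      linear_combination ((kB - (lam₁ : ℂ)) * ω₂) * e0 + ((l : ℂ) * ω₂) * e1
    exact mul_right_cancel₀ hω key'
  -- the second eigenvalue kA + kB - lam₁ lies in the spectrum
  have hmem : (kA + kB - (lam₁ : ℂ)) ∈ spectrum ℂ !![kA, -(l : ℂ); -(l : ℂ), kB] := by
    rw [spectrum.mem_iff]
    intro hunit
    rw [Matrix.isUnit_iff_isUnit_det, isUnit_iff_ne_zero] at hunit
    apply hunit
    have : (algebraMap ℂ (Matrix (Fin 2) (Fin 2) ℂ)) (kA + kB - (lam₁ : ℂ))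
        - !![kA, -(l : ℂ); -(l : ℂ), kB]
        = !![kB - (lam₁ : ℂ), (l : ℂ); (l : ℂ), kA - (lam₁ : ℂ)] := by
      ext i j
      fin_cases i <;> fin_cases j <;>
        simp [Matrix.algebraMap_matrix_apply] <;> ring
    rw [this, Matrix.det_fin_two_of]
    linear_combination key
  have him : (kA + kB).im = 0 := by
    have := hspec _ hmem
    simpa using this
  set r := ω₂ / ω₁ with hr
  have hrne : r ≠ 0 := div_ne_zero hω₂ hω₁
  have hmain : (l : ℂ) * (r + 1 / r) = kA + kB - 2 * (lam₁ : ℂ) := by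
    rw [hr]
    field_simp
    linear_combination -ω₂ * e0 - ω₁ * e1
  have h1 : (r + 1 / r).im = 0 := by
    have h2 : ((l : ℂ) * (r + 1 / r)).im = 0 := by
      rw [hmain]
      simp [him]
    rw [show ((l : ℂ) * (r + 1 / r)).im = l * (r + 1 / r).im by
      simp [Complex.mul_im]] at h2
    exact (mul_eq_zero.mp h2).resolve_left hl
  refine ⟨h1, ?_⟩
  have hinv : (1 / r).im = -r.im / Complex.normSq r := by
    simp [one_div, Complex.inv_im]
  rw [Complex.add_im, hinv] at h1
  have hnsq : Complex.normSq r ≠ 0 := (Complex.normSq_pos.mpr hrne).ne'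
  have h3 : r.im * (Complex.normSq r - 1) = 0 := by
    field_simp at h1
    linarith [h1]
  rcases mul_eq_zero.mp h3 with h | h
  · exact Or.inl h
  · right
    have : Complex.normSq r = 1 := by linarith
    rw [← Complex.sq_norm] at this
    nlinarith [norm_nonneg r]
end
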